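/- Let μ ∈ 𝒫₂(ℝ^d), U a compact metric space, f : ℝ^d × U → ℝ^d continuous with |f(x,u) − f(y,u)| ≤ C_f|x−y| and |f(x,u)| ≤ C₁(1+|x|+ς(μ)). Let (ζₙ) ⊂ 𝒫(U) converge narrowly to ζ ∈ 𝒫(U), and define ṽₙ(y) := ∫_U f(y,u) ζₙ(du), v(y) := ∫_U f(y,u) ζ(du). Then ‖ṽₙ − v‖_{L²(μ)} → 0 as n → ∞. -/

import Mathlib

open MeasureTheory Filter Topology

theorem stmt16 {d : ℕ} {U : Type*} [MetricSpace U] [CompactSpace U]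
    [MeasurableSpace U] [BorelSpace U]
    (μ : Measure (EuclideanSpace ℝ (Fin d))) [IsProbabilityMeasure μ]
    (hμ2 : Integrable (fun x => ‖x‖ ^ 2) μ)
    (f : EuclideanSpace ℝ (Fin d) × U → EuclideanSpace ℝ (Fin d)) (hf : Continuous f)
    (Cf C₁ : ℝ)
    (hLip : ∀ x y u, ‖f (x, u) - f (y, u)‖ ≤ Cf * ‖x - y‖)
    (hgrowth : ∀ x u, ‖f (x, u)‖ ≤ C₁ * (1 + ‖x‖ + Real.sqrt (∫ y, ‖y‖ ^ 2 ∂μ)))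
    (ζn : ℕ → Measure U) (ζ : Measure U)
    [∀ n, IsProbabilityMeasure (ζn n)] [IsProbabilityMeasure ζ]
    (hnarrow : ∀ g : U → ℝ, Continuous g →
      Tendsto (fun n => ∫ u, g u ∂(ζn n)) atTop (𝓝 (∫ u, g u ∂ζ))) :
    Tendsto (fun n => ∫ y, ‖(∫ u, f (y, u) ∂(ζn n)) - ∫ u, f (y, u) ∂ζ‖ ^ 2 ∂μ)
      atTop (𝓝 0) := by
  haveI hU : Nonempty U := by
    by_contra h
    rw [not_nonempty_iff] at h
    have h1 : (ζ : Measure U) Set.univ = 1 := measure_univ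
    rw [Set.univ_eq_empty_iff.mpr h, measure_empty] at h1
    exact zero_ne_one h1
  set σ : ℝ := Real.sqrt (∫ y, ‖y‖ ^ 2 ∂μ) with hσdef
  have hσ : 0 ≤ σ := Real.sqrt_nonneg _
  obtain ⟨u₀⟩ := hU
  have hC₁ : 0 ≤ C₁ := by
    have h := hgrowth 0 u₀
    have h0 : (0:ℝ) ≤ ‖f (0, u₀)‖ := norm_nonneg _
    have hn : ‖(0 : EuclideanSpace ℝ (Fin d))‖ = 0 := norm_zero
    rw [hn] at h
    nlinarith
  -- integrability of u ↦ f (y, u) over any measure on U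
  have hint : ∀ (ν : Measure U) [IsProbabilityMeasure ν] (y : EuclideanSpace ℝ (Fin d)),
      Integrable (fun u => f (y, u)) ν := by
    intro ν _ y
    have hc : Continuous fun u => f (y, u) := hf.comp (Continuous.prodMk_right y)
    exact hc.integrable_of_hasCompactSupport (HasCompactSupport.of_compactSpace _)
  -- bound on the averaged vector field
  have hb : ∀ (ν : Measure U) [IsProbabilityMeasure ν] (y : EuclideanSpace ℝ (Fin d)),
      ‖∫ u, f (y, u) ∂ν‖ ≤ C₁ * (1 + ‖y‖ + σ) := by
    intro ν _ y
    have := norm_integral_le_of_norm_le_const (μ := ν) (f := fun u => f (y, u))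
      (C := C₁ * (1 + ‖y‖ + σ)) (Filter.Eventually.of_forall fun u => hgrowth y u)
    simpa [measure_univ] using this
  -- continuity of the averaged vector field
  have hcont : ∀ (ν : Measure U) [IsProbabilityMeasure ν],
      Continuous fun y => ∫ u, f (y, u) ∂ν := by
    intro ν _
    have hlip : LipschitzWith ⟨max Cf 0, le_max_right _ _⟩
        (fun y => ∫ u, f (y, u) ∂ν) := by
      apply LipschitzWith.of_dist_le_mul
      intro x y
      rw [dist_eq_norm, dist_eq_norm, ← integral_sub (hint ν x) (hint ν y)]
      have := norm_integral_le_of_norm_le_const (μ := ν)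
        (f := fun u => f (x, u) - f (y, u)) (C := max Cf 0 * ‖x - y‖)
        (Filter.Eventually.of_forall fun u => by
          calc ‖f (x, u) - f (y, u)‖ ≤ Cf * ‖x - y‖ := hLip x y u
          _ ≤ max Cf 0 * ‖x - y‖ :=
            mul_le_mul_of_nonneg_right (le_max_left _ _) (norm_nonneg _))
      exact (by simpa [measure_univ] using this : ‖∫ u, f (x, u) - f (y, u) ∂ν‖ ≤ max Cf 0 * ‖x - y‖)
    exact hlip.continuous
  -- pointwise convergence
  have hpt : ∀ y : EuclideanSpace ℝ (Fin d),
      Tendsto (fun n => ∫ u, f (y, u) ∂(ζn n)) atTop (𝓝 (∫ u, f (y, u) ∂ζ)) := by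
    intro y
    set h : EuclideanSpace ℝ (Fin d) ≃L[ℝ] (Fin d → ℝ) :=
      PiLp.continuousLinearEquiv 2 ℝ (fun _ : Fin d => ℝ) with hh
    have hcoord : ∀ i : Fin d,
        Tendsto (fun n => (∫ u, f (y, u) ∂(ζn n)) i) atTop
          (𝓝 ((∫ u, f (y, u) ∂ζ) i)) := by
      intro i
      have hproj : ∀ (ν : Measure U) [IsProbabilityMeasure ν],
          (∫ u, f (y, u) ∂ν) i = ∫ u, (f (y, u)) i ∂ν := by
        intro ν _
        exact ((EuclideanSpace.proj (𝕜 := ℝ) i).integral_comp_comm (hint ν y)).symm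
      have hg : Continuous fun u => (f (y, u)) i :=
        (EuclideanSpace.proj (𝕜 := ℝ) i).continuous.comp ((hf.comp (Continuous.prodMk_right y)))
      have := hnarrow (fun u => (f (y, u)) i) hg
      simp only [← hproj] at this
      exact this
    have hpi : Tendsto (fun n => h (∫ u, f (y, u) ∂(ζn n))) atTop
        (𝓝 (h (∫ u, f (y, u) ∂ζ))) := by
      rw [tendsto_pi_nhds]
      intro i
      exact hcoord i
    have := (h.symm.continuous.tendsto _).comp hpi
    simpa [Function.comp_def] using this
  -- apply dominated convergence
  have hDC := tendsto_integral_of_dominated_convergence (μ := μ)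
      (F := fun n y => ‖(∫ u, f (y, u) ∂(ζn n)) - ∫ u, f (y, u) ∂ζ‖ ^ 2)
      (f := fun _ => (0 : ℝ))
      (bound := fun y => (2 * C₁ * (1 + ‖y‖ + σ)) ^ 2)
      (by
        intro n
        exact (((hcont (ζn n)).sub (hcont ζ)).norm.pow 2).aestronglyMeasurable)
      (by
        -- integrability of the bound
        have hg : Integrable (fun y => (2 * C₁) ^ 2 * 2 * ((1 + σ) ^ 2 + ‖y‖ ^ 2)) μ := by
          apply Integrable.const_mul
          exact (integrable_const _).add hμ2
        apply hg.mono
        · exact (((continuous_const.mul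
            ((continuous_const.add continuous_norm).add continuous_const)).pow 2)).aestronglyMeasurable
        · filter_upwards with y
          have h1 : (2 * C₁ * (1 + ‖y‖ + σ)) ^ 2
              ≤ (2 * C₁) ^ 2 * 2 * ((1 + σ) ^ 2 + ‖y‖ ^ 2) := by
            have hy : 0 ≤ ‖y‖ := norm_nonneg _
            nlinarith [sq_nonneg (1 + σ - ‖y‖), sq_nonneg (1 + σ + ‖y‖), sq_nonneg C₁]
          have h2 : (0:ℝ) ≤ (2 * C₁) ^ 2 * 2 * ((1 + σ) ^ 2 + ‖y‖ ^ 2) := by positivity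
          rw [Real.norm_eq_abs, Real.norm_eq_abs, abs_of_nonneg (by positivity),
            abs_of_nonneg h2]
          exact h1)
      (by
        intro n
        filter_upwards with y
        have h1 : ‖(∫ u, f (y, u) ∂(ζn n)) - ∫ u, f (y, u) ∂ζ‖
            ≤ 2 * C₁ * (1 + ‖y‖ + σ) := by
          calc ‖(∫ u, f (y, u) ∂(ζn n)) - ∫ u, f (y, u) ∂ζ‖
              ≤ ‖∫ u, f (y, u) ∂(ζn n)‖ + ‖∫ u, f (y, u) ∂ζ‖ := norm_sub_le _ _
            _ ≤ C₁ * (1 + ‖y‖ + σ) + C₁ * (1 + ‖y‖ + σ) :=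
              add_le_add (hb (ζn n) y) (hb ζ y)
            _ = 2 * C₁ * (1 + ‖y‖ + σ) := by ring
        rw [Real.norm_eq_abs, abs_of_nonneg (by positivity)]
        exact pow_le_pow_left₀ (norm_nonneg _) h1 2)
      (by
        filter_upwards with y
        have hcg : Continuous fun z : EuclideanSpace ℝ (Fin d) =>
            ‖z - ∫ u, f (y, u) ∂ζ‖ ^ 2 :=
          (continuous_id.sub continuous_const).norm.pow 2
        have h2 := (hcg.tendsto (∫ u, f (y, u) ∂ζ)).comp (hpt y)
        simpa [Function.comp_def] using h2)
  simpa using hDC
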